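/- (Tikhonov-type regularization convergence.) Let D ⊆ ℝ^d × ℝ^p be a nonempty closed convex set, L : ℝ^p → ℝ and J : ℝ^d → ℝ continuous strictly convex functions with compact sublevel sets. Let h* be the (unique) h-component minimizing L over D, and let λ* be the unique minimizer of J over { λ : (λ, h*) ∈ D } (assumed nonempty). For each n let (λ_n, h_n) be the unique minimizer of L(h) + (1/n) J(λ) over D. Then (λ_n, h_n) → (λ*, h*) as n → ∞. -/
import Mathlib


/-- Tikhonov-type regularization convergence: the minimizers of
`L h + (1/n) J λ` over `D` converge to the cascade (lexicographic) optimum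
`(λ*, h*)` as `n → ∞`. -/
theorem stmt_6 (d p : ℕ) (L : (Fin p → ℝ) → ℝ) (J : (Fin d → ℝ) → ℝ)
    (hLcont : Continuous L) (hJcont : Continuous J)
    (hLconv : StrictConvexOn ℝ Set.univ L) (hJconv : StrictConvexOn ℝ Set.univ J)
    (D : Set ((Fin d → ℝ) × (Fin p → ℝ)))
    (hDne : D.Nonempty) (hDclosed : IsClosed D) (hDconv : Convex ℝ D)
    (hcompact : ∀ (n : ℕ), 1 ≤ n → ∀ c : ℝ,
      IsCompact {z : (Fin d → ℝ) × (Fin p → ℝ) | L z.2 + (1 / (n : ℝ)) * J z.1 ≤ c})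
    (lam : Fin d → ℝ) (hstar : Fin p → ℝ)
    -- `h*` is the `h`-component of a point of `D` and minimizes `L` over `D`
    (hfeas : ∃ l, (l, hstar) ∈ D)
    (hLmin : ∀ z ∈ D, L hstar ≤ L z.2)
    -- `λ*` minimizes `J` over `{λ : (λ, h*) ∈ D}`
    (hlamfeas : (lam, hstar) ∈ D)
    (hJmin : ∀ l : Fin d → ℝ, (l, hstar) ∈ D → J lam ≤ J l)
    -- `(λ_n, h_n)` minimizes `L h + (1/n) J λ` over `D`
    (z : ℕ → (Fin d → ℝ) × (Fin p → ℝ))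
    (hzmem : ∀ (n : ℕ), 1 ≤ n → z n ∈ D)
    (hzmin : ∀ (n : ℕ), 1 ≤ n → ∀ z' ∈ D,
      L (z n).2 + (1 / (n : ℝ)) * J (z n).1 ≤ L z'.2 + (1 / (n : ℝ)) * J z'.1) :
    Filter.Tendsto z Filter.atTop (nhds (lam, hstar)) := by

  have hJle : ∀ n, 1 ≤ n → J (z n).1 ≤ J lam := by
    intro n hn
    have h1 := hzmin n hn (lam, hstar) hlamfeas
    have h2 := hLmin (z n) (hzmem n hn)
    have hpos : (0:ℝ) < 1 / (n:ℝ) := by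
      have : (1:ℝ) ≤ (n:ℝ) := by exact_mod_cast hn
      positivity
    nlinarith
  have hLle : ∀ n, 1 ≤ n →
      L (z n).2 ≤ L hstar + (1/(n:ℝ)) * (J lam - J (z n).1) := by
    intro n hn
    have h1 := hzmin n hn (lam, hstar) hlamfeas
    nlinarith
  -- all minimizers lie in a fixed compact set
  have hmemK : ∀ n, 1 ≤ n →
      L (z n).2 + (1 / ((1:ℕ):ℝ)) * J (z n).1 ≤ L hstar + J lam := by
    intro n hn
    have h1 := hJle n hn
    have h2 := hLle n hn
    have hle1 : 1/(n:ℝ) ≤ 1 := by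
      have : (1:ℝ) ≤ (n:ℝ) := by exact_mod_cast hn
      rw [div_le_one (by linarith)]; linarith
    have hpos : (0:ℝ) < 1 / (n:ℝ) := by
      have : (1:ℝ) ≤ (n:ℝ) := by exact_mod_cast hn
      positivity
    have : (1/(n:ℝ)) * (J lam - J (z n).1) ≤ J lam - J (z n).1 := by
      nlinarith
    push_cast
    nlinarith
  -- key: any limit of a subsequence equals (lam, hstar)
  have key : ∀ (k : ℕ → ℕ), (∀ i, 1 ≤ k i) → Filter.Tendsto k Filter.atTop Filter.atTop →
      ∀ w, Filter.Tendsto (fun i => z (k i)) Filter.atTop (nhds w) → w = (lam, hstar) := by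
    intro k hk1 hktop w hw
    have hwD : w ∈ D :=
      hDclosed.mem_of_tendsto hw (Filter.Eventually.of_forall fun i => hzmem _ (hk1 i))
    have hinv : Filter.Tendsto (fun i => 1 / ((k i : ℝ))) Filter.atTop (nhds 0) :=
      tendsto_one_div_atTop_nhds_zero_nat.comp hktop
    have hw1 : Filter.Tendsto (fun i => (z (k i)).1) Filter.atTop (nhds w.1) :=
      (continuous_fst.tendsto w).comp hw
    have hw2' : Filter.Tendsto (fun i => (z (k i)).2) Filter.atTop (nhds w.2) :=
      (continuous_snd.tendsto w).comp hw
    have hJw : Filter.Tendsto (fun i => J (z (k i)).1) Filter.atTop (nhds (J w.1)) :=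
      (hJcont.tendsto w.1).comp hw1
    have hLw : Filter.Tendsto (fun i => L (z (k i)).2) Filter.atTop (nhds (L w.2)) :=
      (hLcont.tendsto w.2).comp hw2'
    have hLwle : L w.2 ≤ L hstar := by
      have hrhs : Filter.Tendsto
          (fun i => L hstar + (1/((k i:ℕ):ℝ)) * (J lam - J (z (k i)).1))
          Filter.atTop (nhds (L hstar + 0 * (J lam - J w.1))) :=
        tendsto_const_nhds.add (hinv.mul (tendsto_const_nhds.sub hJw))
      have := le_of_tendsto_of_tendsto' hLw hrhs (fun i => hLle (k i) (hk1 i))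
      simpa using this
    have hLeq : L w.2 = L hstar := le_antisymm hLwle (hLmin w hwD)
    have hsnd : w.2 = hstar := by
      by_contra hne
      have hmD : ((1/2:ℝ) • w + (1/2:ℝ) • (lam, hstar)) ∈ D :=
        hDconv hwD hlamfeas (by norm_num) (by norm_num) (by norm_num)
      have hm2 : ((1/2:ℝ) • w + (1/2:ℝ) • (lam, hstar)).2
          = (1/2:ℝ) • w.2 + (1/2:ℝ) • hstar := rfl
      have hlt := hLconv.2 (Set.mem_univ w.2) (Set.mem_univ hstar) hne
        (by norm_num : (0:ℝ) < 1/2) (by norm_num : (0:ℝ) < 1/2) (by norm_num)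
      have := hLmin _ hmD
      rw [hm2] at this
      rw [hLeq] at hlt
      simp only [smul_eq_mul] at hlt
      linarith
    have hwfeas : (w.1, hstar) ∈ D := by
      rw [← hsnd]; exact hwD
    have hJwle : J w.1 ≤ J lam :=
      le_of_tendsto' hJw (fun i => hJle (k i) (hk1 i))
    have hJeq : J w.1 = J lam := le_antisymm hJwle (hJmin w.1 hwfeas)
    have hfst : w.1 = lam := by
      by_contra hne
      have hmD : ((1/2:ℝ) • ((w.1, hstar) : (Fin d → ℝ) × (Fin p → ℝ))
          + (1/2:ℝ) • (lam, hstar)) ∈ D :=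
        hDconv hwfeas hlamfeas (by norm_num) (by norm_num) (by norm_num)
      have hm : ((1/2:ℝ) • ((w.1, hstar) : (Fin d → ℝ) × (Fin p → ℝ))
          + (1/2:ℝ) • (lam, hstar))
          = ((1/2:ℝ) • w.1 + (1/2:ℝ) • lam, hstar) := by
        ext <;> simp [Prod.smul_def]
        · ring
      rw [hm] at hmD
      have hlt := hJconv.2 (Set.mem_univ w.1) (Set.mem_univ lam) hne
        (by norm_num : (0:ℝ) < 1/2) (by norm_num : (0:ℝ) < 1/2) (by norm_num)
      have := hJmin _ hmD
      rw [hJeq] at hlt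
      simp only [smul_eq_mul] at hlt
      linarith
    exact Prod.ext hfst hsnd
  apply Filter.tendsto_of_subseq_tendsto
  intro ns hns
  obtain ⟨N, hN⟩ := (hns.eventually_ge_atTop 1).exists_forall_of_atTop
  have hK := hcompact 1 le_rfl (L hstar + J lam)
  have hu : ∀ i : ℕ, z (ns (i + N)) ∈
      {z : (Fin d → ℝ) × (Fin p → ℝ) |
        L z.2 + (1 / ((1:ℕ):ℝ)) * J z.1 ≤ L hstar + J lam} := by
    intro i
    exact hmemK (ns (i + N)) (hN (i + N) (Nat.le_add_left N i))
  obtain ⟨w, hwK, φ, hφ, hφt⟩ := hK.tendsto_subseq hu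
  refine ⟨fun i => φ i + N, ?_⟩
  have hk1 : ∀ i, 1 ≤ ns (φ i + N) := fun i => hN (φ i + N) (Nat.le_add_left N _)
  have hktop : Filter.Tendsto (fun i => ns (φ i + N)) Filter.atTop Filter.atTop := by
    refine hns.comp (Filter.tendsto_atTop_mono (fun i => ?_) Filter.tendsto_id)
    exact le_trans hφ.le_apply (Nat.le_add_right _ N)
  have := key (fun i => ns (φ i + N)) hk1 hktop w hφt
  rw [this] at hφt
  exact hφt
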